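/- Let f be holomorphic on a neighborhood of the disc D(m, 2r) with f(m) ≠ 0, and suppose there exists z ∈ D(m,r) with 2^7 · γ(f,z) · r ≤ 1, where γ(f,z) = sup_{k≥1}|f^{(k)}(z)/(k! f(z))|^{1/k}. Then |f(m)| ≥ 6·r·sup_{w ∈ D(m,2r)} |f'(w)|. In particular f has no zero in D(m,r). -/

import Mathlib

open Complex Metric

def gammaSet (h : ℂ → ℂ) (z : ℂ) : Set ℝ :=
  {x | ∃ k : ℕ, 1 ≤ k ∧ x = ‖iteratedDeriv k h z / ((k.factorial : ℂ) * h z)‖ ^ ((1 : ℝ) / k)}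

set_option maxHeartbeats 1000000 in
theorem stmt19 (f : ℂ → ℂ) (m : ℂ) (r : ℝ) (hr : 0 < r) (U : Set ℂ) (hU : IsOpen U)
    (hsub : closedBall m (2*r) ⊆ U) (hf : DifferentiableOn ℂ f U) (hm : f m ≠ 0)
    (hex : ∃ z ∈ ball m r, f z ≠ 0 ∧ ∃ γ, IsLUB (gammaSet f z) γ ∧ 2^7 * γ * r ≤ 1) :
    6 * r * sSup ((fun w => ‖deriv f w‖) '' closedBall m (2*r)) ≤ ‖f m‖ ∧
      ∀ w ∈ ball m r, f w ≠ 0 := by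
  obtain ⟨z, hz, hfz, γ, hlub, hγr⟩ := hex
  have hzm : dist z m < r := mem_ball.mp hz
  have hfz' : (0:ℝ) < ‖f z‖ := norm_pos_iff.mpr hfz
  have hγ0 : 0 ≤ γ :=
    le_trans (Real.rpow_nonneg (norm_nonneg _) _) (hlub.1 ⟨1, le_rfl, rfl⟩)
  have h128 : 128 * γ * r ≤ 1 := by norm_num at hγr; linarith
  have h4rγ : 4 * r * γ ≤ 1 / 32 := by nlinarith
  -- power series of f at z
  set R : NNReal := ⟨r, hr.le⟩ with hRdef
  have hball : closedBall z (R:ℝ) ⊆ closedBall m (2*r) := by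
    intro x hx
    have h1 : dist x z ≤ r := mem_closedBall.mp hx
    have h2 := dist_triangle x z m
    exact mem_closedBall.mpr (by linarith)
  have hps : HasFPowerSeriesOnBall f (cauchyPowerSeries f z R) z R :=
    ((hf.mono hsub).mono hball).hasFPowerSeriesOnBall (by exact_mod_cast hr)
  set p := cauchyPowerSeries f z R with hpdef
  set c : ℕ → ℂ := fun k => p.coeff k with hcdef
  have hcd : ∀ k, (k.factorial : ℂ) * c k = iteratedDeriv k f z := by
    intro k
    calc (k.factorial : ℂ) * c k = k.factorial • (p.coeff k) := (nsmul_eq_mul _ _).symm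
      _ = k.factorial • p k (fun _ => 1) := rfl
      _ = iteratedFDeriv ℂ k f z (fun _ => 1) := hps.factorial_smul 1 k
      _ = iteratedDeriv k f z := (iteratedDeriv_eq_iteratedFDeriv).symm
  have hc0eq : c 0 = f z := by
    have h := hcd 0
    simpa using h
  have hc : ∀ k, 1 ≤ k → ‖c k‖ ≤ ‖f z‖ * γ ^ k := by
    intro k hk
    have hk0 : k ≠ 0 := by omega
    have hmem : ‖iteratedDeriv k f z / ((k.factorial : ℂ) * f z)‖ ^ ((1:ℝ)/k) ≤ γ :=
      hlub.1 ⟨k, hk, rfl⟩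
    have hnn : (0:ℝ) ≤ ‖iteratedDeriv k f z / ((k.factorial : ℂ) * f z)‖ := norm_nonneg _
    have heq' : ‖iteratedDeriv k f z / ((k.factorial : ℂ) * f z)‖ ≤ γ ^ k := by
      have h2 := pow_le_pow_left₀ (Real.rpow_nonneg hnn _) hmem k
      rwa [one_div, Real.rpow_inv_natCast_pow hnn hk0] at h2
    have hfact : ((k.factorial : ℂ)) ≠ 0 := by
      exact_mod_cast Nat.cast_ne_zero.mpr k.factorial_ne_zero
    have hck : c k = iteratedDeriv k f z / (k.factorial : ℂ) := by
      field_simp [← hcd k]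
      rw [← hcd k]; ring
    have key : ‖c k‖ = ‖iteratedDeriv k f z / ((k.factorial : ℂ) * f z)‖ * ‖f z‖ := by
      rw [hck, ← norm_mul]
      congr 1
      field_simp
    rw [key, mul_comm (‖f z‖)]
    exact mul_le_mul_of_nonneg_right heq' (norm_nonneg _)
  -- the globally defined series g
  set t : Set ℂ := ball z (4*r) with htdef
  set gg : ℕ → ℂ → ℂ := fun n x => (x - z)^n * c n with hggdef
  set gg' : ℕ → ℂ → ℂ := fun n x => (n : ℂ) * (x - z)^(n-1) * c n with hgg'def
  set g : ℂ → ℂ := fun x => ∑' n, gg n x with hgdef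
  have hder : ∀ (n : ℕ) (x : ℂ), HasDerivAt (gg n) (gg' n x) x := by
    intro n x
    have h := (((hasDerivAt_id x).sub_const z).pow n).mul_const (c n)
    simpa [hggdef, hgg'def, mul_comm, mul_assoc, mul_left_comm] using h
  have hxz4 : ∀ x ∈ t, ‖x - z‖ ≤ 4*r := by
    intro x hx
    have := mem_ball.mp hx
    rw [dist_eq_norm] at this
    linarith
  have hterm : ∀ (n : ℕ) (x : ℂ), x ∈ t → ‖gg n x‖ ≤ ‖f z‖ * (1/32)^n := by
    intro n x hx
    rcases Nat.eq_zero_or_pos n with h0 | h1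
    · subst h0; simp [hggdef, hc0eq]
    · have hxz := hxz4 x hx
      have hb : ‖gg n x‖ ≤ (4*r)^n * (‖f z‖ * γ^n) := by
        rw [hggdef]
        simp only [norm_mul, norm_pow]
        have := hc n h1
        gcongr
      calc ‖gg n x‖ ≤ (4*r)^n * (‖f z‖*γ^n) := hb
        _ = ‖f z‖ * (4*r*γ)^n := by rw [mul_pow]; ring
        _ ≤ ‖f z‖ * (1/32)^n := by
            have h5 := pow_le_pow_left₀ (by positivity : (0:ℝ) ≤ 4*r*γ) h4rγ n
            exact mul_le_mul_of_nonneg_left h5 (norm_nonneg _)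
  have hz4 : z ∈ t := mem_ball_self (by positivity)
  have hsum0 : Summable (fun n => gg n z) := by
    apply summable_of_ne_finset_zero (s := {0})
    intro n hn
    have hn0 : n ≠ 0 := by simpa using hn
    simp [hggdef, zero_pow hn0]
  have hu : HasSum (fun n : ℕ => (16*‖f z‖*γ) * (1/16)^n)
      ((16*‖f z‖*γ) * (1 - 1/16)⁻¹) :=
    (hasSum_geometric_of_lt_one (by norm_num) (by norm_num)).mul_left _
  have hbound' : ∀ (n : ℕ) (x : ℂ), x ∈ t → ‖gg' n x‖ ≤ (16*‖f z‖*γ) * (1/16)^n := by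
    intro n x hx
    have hxz := hxz4 x hx
    match n with
    | 0 =>
      have : gg' 0 x = 0 := by simp [hgg'def]
      rw [this, norm_zero]
      have : (0:ℝ) ≤ 16*‖f z‖*γ := by
        have := norm_nonneg (f z); nlinarith
      simpa using this
    | Nat.succ k =>
      have h1 : ‖gg' (k+1) x‖ ≤ ((k:ℝ)+1) * (4*r)^k * (‖f z‖ * γ^(k+1)) := by
        rw [hgg'def]
        simp only [Nat.add_sub_cancel, norm_mul, norm_pow]
        have hnrm : ‖((k+1 : ℕ) : ℂ)‖ = ((k:ℝ)+1) := by
          rw [Complex.norm_natCast]; push_cast; ring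
        rw [hnrm]
        have hck1 := hc (k+1) (by omega)
        have hxz' : ‖x - z‖ ^ k ≤ (4*r) ^ k :=
          pow_le_pow_left₀ (norm_nonneg _) hxz k
        have h0 : (0:ℝ) ≤ (k:ℝ)+1 := by positivity
        apply mul_le_mul _ hck1 (norm_nonneg _) (by positivity)
        exact mul_le_mul_of_nonneg_left hxz' h0
      have h2 : ((k:ℝ)+1) * (4*r)^k * (‖f z‖ * γ^(k+1)) ≤ (16*‖f z‖*γ) * (1/16)^(k+1) := by
        have hle2 : ((k:ℝ)+1) ≤ 2^k := by
          exact_mod_cast Nat.succ_le_of_lt (k.lt_two_pow_self)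
        have hnn : (0:ℝ) ≤ 4*r*γ := by positivity
        have hp1 : ((4:ℝ)*r*γ)^k ≤ (1/32)^k := pow_le_pow_left₀ hnn h4rγ k
        have hmain : ((k:ℝ)+1) * (4*r*γ)^k ≤ 2^k * (1/32)^k :=
          mul_le_mul hle2 hp1 (pow_nonneg hnn k) (by positivity)
        have hEq : (2:ℝ)^k * (1/32)^k = (1/16)^k := by
          rw [← mul_pow]; norm_num
        calc ((k:ℝ)+1) * (4*r)^k * (‖f z‖ * γ^(k+1))
            = (‖f z‖ * γ) * (((k:ℝ)+1) * (4*r*γ)^k) := by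
              rw [mul_pow]; ring
          _ ≤ (‖f z‖ * γ) * ((1/16)^k) := by
              rw [← hEq]
              exact mul_le_mul_of_nonneg_left hmain (by positivity)
          _ = (16*‖f z‖*γ) * (1/16)^(k+1) := by
              rw [pow_succ]; ring
      exact le_trans h1 h2
  -- derivative of g on t
  have hgderiv : ∀ x ∈ t, HasDerivAt g (∑' n, gg' n x) x := fun x hx =>
    hasDerivAt_tsum_of_isPreconnected hu.summable isOpen_ball
      (convex_ball z (4*r)).isPreconnected
      (fun n y _ => hder n y) hbound' hz4 hsum0 hx
  have hdbound : ∀ x ∈ t, ‖∑' n, gg' n x‖ ≤ ‖f z‖ * γ * (256/15) := by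
    intro x hx
    have h1 := tsum_of_norm_bounded hu (fun n => hbound' n x hx)
    have h2 : (16*‖f z‖*γ) * (1 - 1/16 : ℝ)⁻¹ = ‖f z‖ * γ * (256/15) := by
      norm_num; ring
    rwa [h2] at h1
  have hgdiff : DifferentiableOn ℂ g t := fun x hx =>
    ((hgderiv x hx).differentiableAt).differentiableWithinAt
  have hganal : AnalyticOnNhd ℂ g t := hgdiff.analyticOnNhd isOpen_ball
  -- f = g on ball z r
  have hfg_ball : Set.EqOn f g (ball z r) := by
    intro x hx
    have hy : (x - z) ∈ EMetric.ball (0:ℂ) R := by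
      show edist (x - z) 0 < (R : ENNReal)
      rw [edist_zero_right]
      have hxr : ‖x - z‖ < r := by
        have := mem_ball.mp hx; rwa [dist_eq_norm] at this
      exact_mod_cast (by exact_mod_cast hxr : ‖x - z‖₊ < R)
    have hsum := hps.hasSum hy
    simp only [FormalMultilinearSeries.apply_eq_pow_smul_coeff, smul_eq_mul] at hsum
    rw [add_sub_cancel] at hsum
    exact hsum.tsum_eq.symm
  -- neighborhood V of the closed ball where f = g
  obtain ⟨δ, hδ0, hδ⟩ :=
    (isCompact_closedBall m (2*r)).exists_thickening_subset_open hU hsub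
  set ε : ℝ := min δ r with hεdef
  have hε0 : 0 < ε := lt_min hδ0 hr
  have hεδ : ε ≤ δ := min_le_left _ _
  have hεr : ε ≤ r := min_le_right _ _
  set V : Set ℂ := ball m (2*r + ε) with hVdef
  have hVU : V ⊆ U := by
    refine subset_trans ?_ hδ
    rw [thickening_closedBall hδ0 (by positivity) m]
    exact ball_subset_ball (by linarith)
  have hVt : V ⊆ t := by
    intro x hx
    have h1 : dist x m < 2*r + ε := mem_ball.mp hx
    have h2 := dist_triangle x m z
    rw [dist_comm m z] at h2
    exact mem_ball.mpr (by linarith)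
  have hzV : z ∈ V := mem_ball.mpr (by linarith)
  have heqV : Set.EqOn f g V :=
    ((hf.analyticOnNhd hU).mono hVU).eqOn_of_preconnected_of_eventuallyEq
      (hganal.mono hVt) (convex_ball m (2*r+ε)).isPreconnected hzV
      (Filter.eventuallyEq_of_mem (ball_mem_nhds z hr) hfg_ball)
  have hcbV : closedBall m (2*r) ⊆ V := closedBall_subset_ball (by linarith)
  -- sum representation and closeness on t
  have hsumw : ∀ w ∈ t, HasSum (fun n => gg n w) (g w) := by
    intro w hw
    refine Summable.hasSum ?_
    exact Summable.of_norm_bounded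
      ((summable_geometric_of_lt_one (by norm_num) (by norm_num)).mul_left ‖f z‖)
      (fun n => hterm n w hw)
  have hclose : ∀ w ∈ t, ‖g w - f z‖ ≤ ‖f z‖ * (1/31) := by
    intro w hw
    have h1 := (hasSum_nat_add_iff' 1).2 (hsumw w hw)
    have h2 : ∑ i ∈ Finset.range 1, gg i w = f z := by
      simp [hggdef, hc0eq]
    rw [h2] at h1
    have hgeo : HasSum (fun n : ℕ => ‖f z‖ * (1/32)^(n+1))
        ((‖f z‖*(1/32)) * (1 - 1/32 : ℝ)⁻¹) := by
      have hh := (hasSum_geometric_of_lt_one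
        (by norm_num : (0:ℝ) ≤ 1/32) (by norm_num)).mul_left (‖f z‖*(1/32))
      have e : (fun n : ℕ => ‖f z‖ * (1/32:ℝ)^(n+1)) = fun i => ‖f z‖ * (1/32) * (1/32)^i := by
        funext n; rw [pow_succ]; ring
      rw [e]; exact hh
    have h3 : ‖g w - f z‖ ≤ (‖f z‖*(1/32)) * (1 - 1/32 : ℝ)⁻¹ := by
      rw [← h1.tsum_eq]
      exact tsum_of_norm_bounded hgeo (fun n => hterm (n+1) w hw)
    have h4 : (‖f z‖*(1/32)) * (1 - 1/32 : ℝ)⁻¹ = ‖f z‖ * (1/31) := by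
      norm_num; ring
    rwa [h4] at h3
  -- lower bound for ‖f w‖
  have hlow : ∀ w ∈ closedBall m (2*r), (30/31) * ‖f z‖ ≤ ‖f w‖ := by
    intro w hw
    have hwt : w ∈ t := hVt (hcbV hw)
    have h1 := hclose w hwt
    rw [← heqV (hcbV hw)] at h1
    have h2 : ‖f z‖ - ‖f w‖ ≤ ‖f w - f z‖ := by
      have := norm_sub_norm_le (f z) (f w)
      rwa [norm_sub_rev] at this
    linarith
  have hne : ∀ w ∈ ball m r, f w ≠ 0 := by
    intro w hw hw0
    have hw2 : w ∈ closedBall m (2*r) :=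
      closedBall_subset_closedBall (by linarith) (ball_subset_closedBall hw)
    have := hlow w hw2
    rw [hw0, norm_zero] at this
    nlinarith
  have hfm : (30/31) * ‖f z‖ ≤ ‖f m‖ :=
    hlow m (mem_closedBall_self (by positivity))
  refine ⟨?_, hne⟩
  have hS : ∀ y ∈ (fun w => ‖deriv f w‖) '' closedBall m (2*r),
      y ≤ ‖f z‖ * γ * (256/15) := by
    rintro y ⟨w, hw, rfl⟩
    show ‖deriv f w‖ ≤ ‖f z‖ * γ * (256/15)
    have hwt : w ∈ t := hVt (hcbV hw)
    have hderiv_eq : deriv f w = deriv g w :=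
      Filter.EventuallyEq.deriv_eq
        (Filter.eventuallyEq_of_mem (isOpen_ball.mem_nhds (hcbV hw)) heqV)
    rw [hderiv_eq, (hgderiv w hwt).deriv]
    exact hdbound w hwt
  have hS0 : (0:ℝ) ≤ ‖f z‖ * γ * (256/15) := by
    have := norm_nonneg (f z); nlinarith
  have hSle := Real.sSup_le hS hS0
  nlinarith [mul_le_mul_of_nonneg_left hSle (by positivity : (0:ℝ) ≤ 6*r),
    mul_le_mul_of_nonneg_left h128 (norm_nonneg (f z)),
    mul_nonneg (mul_nonneg hγ0 hr.le) (norm_nonneg (f z))]
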